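/- Double robustness of the AIPW functional, outcome-regression side: under unconfoundedness, for ANY measurable function e : S → ℝ with δ ≤ e(x) ≤ 1 − δ for all x (a possibly misspecified propensity score model), and with the TRUE conditional means μ1(X) = E[Y1 | σ(X)] and μ0(X) = E[Y0 | σ(X)], E[ A·(Y − μ1(X))/e(X) − (1−A)·(Y − μ0(X))/(1 − e(X)) + μ1(X) − μ0(X) | σ(Z) ] = E[Y1 − Y0 | σ(Z)] almost surely. -/

import Mathlib

open MeasureTheory ProbabilityTheory

/-- Conditional-independence product rule for an indicator against an integrable variable,
proved by a change-of-measure argument. -/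
private lemma key_condExp {Ω : Type*} {m : MeasurableSpace Ω} [mΩ : MeasurableSpace Ω]
    (μ : Measure Ω) [IsProbabilityMeasure μ]
    (hm : m ≤ mΩ)
    {s : Set Ω} (hs : MeasurableSet s)
    {W : Ω → ℝ} (hWm : Measurable W) (hWi : Integrable W μ)
    (hprod : ∀ B : Set ℝ, MeasurableSet B →
      (μ[(s ∩ W ⁻¹' B).indicator (fun _ => (1:ℝ)) | m]) =ᵐ[μ]
        fun ω => (μ[s.indicator (fun _ => (1:ℝ)) | m]) ω
          * (μ[(W ⁻¹' B).indicator (fun _ => (1:ℝ)) | m]) ω) :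
    (μ[s.indicator W | m]) =ᵐ[μ]
      fun ω => (μ[s.indicator (fun _ => (1:ℝ)) | m]) ω * (μ[W | m]) ω := by
  set E1s := μ[s.indicator (fun _ => (1:ℝ)) | m] with hE1s_def
  have hE1s_sm : StronglyMeasurable[m] E1s := stronglyMeasurable_condExp
  have hE1s_meas : Measurable E1s := (hE1s_sm.mono hm).measurable
  have hE1s_int : Integrable E1s μ := integrable_condExp
  have hE1s_nn : 0 ≤ᵐ[μ] E1s :=
    condExp_nonneg (Filter.Eventually.of_forall fun ω =>
      Set.indicator_nonneg (fun _ _ => zero_le_one) ω)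
  have hE1s_le : ∀ᵐ ω ∂μ, E1s ω ≤ 1 := by
    have h := condExp_mono (μ := μ) (m := m)
      ((integrable_const (1:ℝ)).indicator hs) (integrable_const (1:ℝ))
      (Filter.Eventually.of_forall fun ω =>
        Set.indicator_le_self' (fun _ _ => zero_le_one) ω)
    filter_upwards [h] with ω hω
    rw [condExp_const hm] at hω
    exact hω
  have habs : ∀ᵐ ω ∂μ, |E1s ω| ≤ 1 := by
    filter_upwards [hE1s_nn, hE1s_le] with ω h0 h1
    rw [abs_of_nonneg h0]; exact h1
  have hmulint : ∀ {f : Ω → ℝ}, Integrable f μ →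
      AEStronglyMeasurable (fun ω => E1s ω * f ω) μ →
      Integrable (fun ω => E1s ω * f ω) μ := by
    intro f hf hasm
    refine hf.mono hasm ?_
    filter_upwards [habs] with ω hω
    simpa [Real.norm_eq_abs, abs_mul] using
      mul_le_of_le_one_left (abs_nonneg (f ω)) hω
  have hEW_int : Integrable (fun ω => E1s ω * W ω) μ :=
    hmulint hWi ((hE1s_meas.mul hWm).aestronglyMeasurable)
  refine (ae_eq_condExp_of_forall_setIntegral_eq hm (hWi.indicator hs) ?_ ?_ ?_).symm
  rotate_left 2
  · exact ((stronglyMeasurable_condExp.mul stronglyMeasurable_condExp).aestronglyMeasurable :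
      AEStronglyMeasurable[m] (fun ω => E1s ω * (μ[W|m]) ω) μ)
  · intro u _ _
    exact (hmulint integrable_condExp
      ((hE1s_meas.mul ((stronglyMeasurable_condExp.mono hm).measurable)).aestronglyMeasurable)).integrableOn
  intro u hu _
  have huΩ : MeasurableSet u := hm u hu
  have step1 : ∫ ω in u, E1s ω * (μ[W|m]) ω ∂μ = ∫ ω in u, E1s ω * W ω ∂μ := by
    have h1 : (fun ω => E1s ω * (μ[W|m]) ω) =ᵐ[μ] μ[(fun ω => E1s ω * W ω)|m] :=
      (condExp_mul_of_stronglyMeasurable_left stronglyMeasurable_condExp hEW_int hWi).symm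
    rw [integral_congr_ae (ae_restrict_of_ae h1)]
    exact setIntegral_condExp hm hEW_int hu
  rw [step1]
  set q : Ω → ℝ := u.indicator E1s with hq_def
  have hq_meas : Measurable q := hE1s_meas.indicator huΩ
  have hq_nn : 0 ≤ᵐ[μ] q := by
    filter_upwards [hE1s_nn] with ω hω
    by_cases h : ω ∈ u
    · simpa [hq_def, h] using hω
    · simp [hq_def, h]
  have hq_int : Integrable q μ := hE1s_int.indicator huΩ
  set f0 : Ω → NNReal := fun ω => Real.toNNReal (q ω) with hf0_def
  have hf0m : Measurable f0 := hq_meas.real_toNNReal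
  have hM : (μ.restrict (u ∩ s)).map W
      = (μ.withDensity (fun ω => (f0 ω : ENNReal))).map W := by
    ext B hB
    have ht : MeasurableSet (W ⁻¹' B) := hWm hB
    set t := W ⁻¹' B with ht_def
    rw [Measure.map_apply hWm hB, Measure.map_apply hWm hB,
      Measure.restrict_apply ht, withDensity_apply _ ht]
    have hcoe : (fun ω => (f0 ω : ENNReal)) = fun ω => ENNReal.ofReal (q ω) := rfl
    rw [hcoe, ← ofReal_integral_eq_lintegral_ofReal hq_int.restrict (ae_restrict_of_ae hq_nn)]
    have htind_int : Integrable (t.indicator (fun _ => (1:ℝ))) μ :=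
      (integrable_const 1).indicator ht
    have hEt_int : Integrable (fun ω => E1s ω * t.indicator (fun _ => (1:ℝ)) ω) μ :=
      hmulint htind_int
        ((hE1s_meas.mul (measurable_const.indicator ht)).aestronglyMeasurable)
    have e1 : ∫ ω in t, q ω ∂μ
        = ∫ ω in u, E1s ω * t.indicator (fun _ => (1:ℝ)) ω ∂μ := by
      rw [← integral_indicator ht, ← integral_indicator huΩ]
      congr 1; funext ω
      by_cases hωt : ω ∈ t <;> by_cases hωu : ω ∈ u <;> simp [hq_def, hωt, hωu]
    have e3 : μ[(fun ω => E1s ω * t.indicator (fun _ => (1:ℝ)) ω)|m]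
        =ᵐ[μ] μ[(s ∩ t).indicator (fun _ => (1:ℝ))|m] := by
      have h1 := condExp_mul_of_stronglyMeasurable_left (m := m) (μ := μ)
        (f := E1s) (g := t.indicator (fun _ => (1:ℝ)))
        stronglyMeasurable_condExp hEt_int htind_int
      exact h1.trans (hprod B hB).symm
    have e2 : ∫ ω in u, E1s ω * t.indicator (fun _ => (1:ℝ)) ω ∂μ
        = ∫ ω in u, (s ∩ t).indicator (fun _ => (1:ℝ)) ω ∂μ := by
      rw [← setIntegral_condExp hm hEt_int hu,
        ← setIntegral_condExp hm ((integrable_const (1:ℝ)).indicator (hs.inter ht)) hu]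
      exact integral_congr_ae (ae_restrict_of_ae e3)
    have e4 : ∫ ω in u, (s ∩ t).indicator (fun _ => (1:ℝ)) ω ∂μ
        = (μ (u ∩ (s ∩ t))).toReal := by
      rw [setIntegral_indicator (hs.inter ht)]
      simp [measureReal_def]
    rw [e1, e2, e4, ENNReal.ofReal_toReal (measure_ne_top μ _)]
    congr 1
    rw [Set.inter_comm t (u ∩ s), Set.inter_assoc]
  calc ∫ ω in u, E1s ω * W ω ∂μ
      = ∫ ω, f0 ω • W ω ∂μ := by
        rw [← integral_indicator huΩ]
        refine (integral_congr_ae ?_).symm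
        filter_upwards [hE1s_nn] with ω hω
        by_cases h : ω ∈ u <;>
          simp [hf0_def, hq_def, h, NNReal.smul_def, Real.coe_toNNReal _ hω]
    _ = ∫ ω, W ω ∂(μ.withDensity (fun ω => (f0 ω : ENNReal))) :=
        (integral_withDensity_eq_integral_smul hf0m W).symm
    _ = ∫ y, y ∂((μ.withDensity (fun ω => (f0 ω : ENNReal))).map W) :=
        (integral_map hWm.aemeasurable (f := fun y => y) aestronglyMeasurable_id).symm
    _ = ∫ y, y ∂((μ.restrict (u ∩ s)).map W) := by rw [hM]
    _ = ∫ ω in u ∩ s, W ω ∂μ :=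
        integral_map hWm.aemeasurable (f := fun y => y) aestronglyMeasurable_id
    _ = ∫ ω in u, s.indicator W ω ∂μ := (setIntegral_indicator hs).symm

private lemma main_aux {Ω : Type*} {m mZ : MeasurableSpace Ω} [mΩ : MeasurableSpace Ω]
    [StandardBorelSpace Ω]
    (μ : Measure Ω) [IsProbabilityMeasure μ]
    (hm : m ≤ mΩ) (hZ : mZ ≤ m)
    (A : Ω → ℝ) (hAm : Measurable A) (hA01 : ∀ ω, A ω = 0 ∨ A ω = 1)
    (Y0 Y1 : Ω → ℝ) (hY0m : Measurable Y0) (hY1m : Measurable Y1)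
    (hY0i : Integrable Y0 μ) (hY1i : Integrable Y1 μ)
    (Y : Ω → ℝ) (hYdef : ∀ ω, Y ω = A ω * Y1 ω + (1 - A ω) * Y0 ω)
    (huncf : CondIndepFun m hm A (fun ω => (Y0 ω, Y1 ω)) μ)
    (δ : ℝ) (hδ0 : 0 < δ)
    (c1 c2 : Ω → ℝ) (hc1m : Measurable[m] c1) (hc2m : Measurable[m] c2)
    (hc1 : ∀ ω, δ ≤ c1 ω) (hc2 : ∀ ω, δ ≤ c2 ω) :
    μ[(fun ω => A ω * (Y ω - (μ[Y1|m]) ω) / c1 ω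
        - (1 - A ω) * (Y ω - (μ[Y0|m]) ω) / c2 ω
        + (μ[Y1|m]) ω - (μ[Y0|m]) ω) | mZ]
      =ᵐ[μ] μ[(fun ω => Y1 ω - Y0 ω) | mZ] := by
  have hμ1m : Measurable (μ[Y1|m]) := (stronglyMeasurable_condExp.mono hm).measurable
  have hμ0m : Measurable (μ[Y0|m]) := (stronglyMeasurable_condExp.mono hm).measurable
  have hAabs : ∀ ω, ‖A ω‖ ≤ 1 := by
    intro ω; rcases hA01 ω with h | h <;> simp [h]
  have h1Aabs : ∀ ω, ‖1 - A ω‖ ≤ 1 := by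
    intro ω; rcases hA01 ω with h | h <;> simp [h]
  have hAi : Integrable A μ :=
    (integrable_const (1:ℝ)).mono hAm.aestronglyMeasurable
      (Filter.Eventually.of_forall fun ω => by simpa using hAabs ω)
  -- indicator descriptions of A and 1 - A
  set s1 : Set Ω := A ⁻¹' {1} with hs1_def
  set s0 : Set Ω := A ⁻¹' {0} with hs0_def
  have hs1 : MeasurableSet s1 := hAm (measurableSet_singleton 1)
  have hs0 : MeasurableSet s0 := hAm (measurableSet_singleton 0)
  have hA_eq : A = s1.indicator (fun _ => (1:ℝ)) := by
    funext ω
    rcases hA01 ω with h | h  <;>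
      simp [Set.indicator_apply, hs1_def, Set.mem_preimage, h]
  have h1A_eq : (fun ω => 1 - A ω) = s0.indicator (fun _ => (1:ℝ)) := by
    funext ω
    rcases hA01 ω with h | h  <;>
      simp [Set.indicator_apply, hs0_def, Set.mem_preimage, h]
  -- product rules from conditional independence
  have hiff := (condIndepFun_iff_condExp_inter_preimage_eq_mul (hm' := hm)
    hAm (hY0m.prodMk hY1m)).mp huncf
  have hprod1 : ∀ B : Set ℝ, MeasurableSet B →
      (μ[(s1 ∩ Y1 ⁻¹' B).indicator (fun _ => (1:ℝ)) | m]) =ᵐ[μ]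
        fun ω => (μ[s1.indicator (fun _ => (1:ℝ)) | m]) ω
          * (μ[(Y1 ⁻¹' B).indicator (fun _ => (1:ℝ)) | m]) ω := by
    intro B hB
    have h := hiff {1} (Set.univ ×ˢ B) (measurableSet_singleton 1)
      (MeasurableSet.univ.prod hB)
    have hset : (fun ω => (Y0 ω, Y1 ω)) ⁻¹' (Set.univ ×ˢ B) = Y1 ⁻¹' B := by
      ext ω; simp
    rw [hset] at h
    exact h
  have hprod0 : ∀ B : Set ℝ, MeasurableSet B →
      (μ[(s0 ∩ Y0 ⁻¹' B).indicator (fun _ => (1:ℝ)) | m]) =ᵐ[μ]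
        fun ω => (μ[s0.indicator (fun _ => (1:ℝ)) | m]) ω
          * (μ[(Y0 ⁻¹' B).indicator (fun _ => (1:ℝ)) | m]) ω := by
    intro B hB
    have h := hiff {0} (B ×ˢ Set.univ) (measurableSet_singleton 0)
      (hB.prod MeasurableSet.univ)
    have hset : (fun ω => (Y0 ω, Y1 ω)) ⁻¹' (B ×ˢ Set.univ) = Y0 ⁻¹' B := by
      ext ω; simp
    rw [hset] at h
    exact h
  have key1 := key_condExp μ hm hs1 hY1m hY1i hprod1
  have key0 := key_condExp μ hm hs0 hY0m hY0i hprod0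
  -- the centered terms have conditional expectation zero
  set W1 : Ω → ℝ := fun ω => (Y1 ω - (μ[Y1|m]) ω) * A ω with hW1_def
  set W0 : Ω → ℝ := fun ω => (Y0 ω - (μ[Y0|m]) ω) * (1 - A ω) with hW0_def
  have hW1m : Measurable W1 := (hY1m.sub hμ1m).mul hAm
  have hW0m : Measurable W0 := (hY0m.sub hμ0m).mul (measurable_const.sub hAm)
  have hbd_int : ∀ {f b : Ω → ℝ}, Integrable f μ →
      AEStronglyMeasurable (fun ω => f ω * b ω) μ → (∀ ω, ‖b ω‖ ≤ 1) →
      Integrable (fun ω => f ω * b ω) μ := by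
    intro f b hf hasm hb
    refine hf.mono hasm (Filter.Eventually.of_forall fun ω => ?_)
    rw [norm_mul]
    exact mul_le_of_le_one_right (norm_nonneg _) (hb ω)
  have hW1i : Integrable W1 μ :=
    hbd_int (hY1i.sub integrable_condExp) hW1m.aestronglyMeasurable hAabs
  have hW0i : Integrable W0 μ :=
    hbd_int (hY0i.sub integrable_condExp) hW0m.aestronglyMeasurable h1Aabs
  have hμ1A_int : Integrable (fun ω => (μ[Y1|m]) ω * A ω) μ :=
    hbd_int integrable_condExp (hμ1m.mul hAm).aestronglyMeasurable hAabs
  have hμ0A_int : Integrable (fun ω => (μ[Y0|m]) ω * (1 - A ω)) μ :=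
    hbd_int integrable_condExp (hμ0m.mul (measurable_const.sub hAm)).aestronglyMeasurable h1Aabs
  have hW1z : μ[W1|m] =ᵐ[μ] 0 := by
    have hd : W1 = fun ω => s1.indicator Y1 ω - (μ[Y1|m]) ω * A ω := by
      funext ω
      by_cases h : ω ∈ s1
      · have hA1 : A ω = 1 := h
        simp [hW1_def, Set.indicator_of_mem h, hA1]
      · have hA0 : A ω = 0 := by
          rcases hA01 ω with h' | h'
          · exact h'
          · exact absurd h' h
        simp [hW1_def, Set.indicator_of_notMem h, hA0]
    have h0 : μ[W1|m] =ᵐ[μ] μ[s1.indicator Y1|m] - μ[(fun ω => (μ[Y1|m]) ω * A ω)|m] := by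
      rw [hd]
      exact condExp_sub (hY1i.indicator hs1) hμ1A_int m
    have h1 : μ[(fun ω => (μ[Y1|m]) ω * A ω)|m]
        =ᵐ[μ] fun ω => (μ[Y1|m]) ω * (μ[A|m]) ω :=
      condExp_mul_of_stronglyMeasurable_left stronglyMeasurable_condExp hμ1A_int hAi
    have h2 : μ[A|m] = μ[s1.indicator (fun _ => (1:ℝ))|m] := by rw [hA_eq]
    filter_upwards [h0, key1, h1] with ω e0 ek e1'
    rw [h2] at e1'
    simp only [Pi.sub_apply, Pi.zero_apply] at *
    rw [e0, ek, e1']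
    ring
  have hW0z : μ[W0|m] =ᵐ[μ] 0 := by
    have hd : W0 = fun ω => s0.indicator Y0 ω - (μ[Y0|m]) ω * (1 - A ω) := by
      funext ω
      by_cases h : ω ∈ s0
      · have hA0 : A ω = 0 := h
        simp [hW0_def, Set.indicator_of_mem h, hA0]
      · have hA1 : A ω = 1 := by
          rcases hA01 ω with h' | h'
          · exact absurd h' h
          · exact h'
        simp [hW0_def, Set.indicator_of_notMem h, hA1]
    have h0 : μ[W0|m] =ᵐ[μ] μ[s0.indicator Y0|m]
        - μ[(fun ω => (μ[Y0|m]) ω * (1 - A ω))|m] := by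
      rw [hd]
      exact condExp_sub (hY0i.indicator hs0) hμ0A_int m
    have h1 : μ[(fun ω => (μ[Y0|m]) ω * (1 - A ω))|m]
        =ᵐ[μ] fun ω => (μ[Y0|m]) ω * (μ[(fun ω => 1 - A ω)|m]) ω :=
      condExp_mul_of_stronglyMeasurable_left stronglyMeasurable_condExp hμ0A_int
        ((integrable_const (1:ℝ)).sub hAi)
    have h2 : μ[(fun ω => 1 - A ω)|m] = μ[s0.indicator (fun _ => (1:ℝ))|m] := by rw [h1A_eq]
    filter_upwards [h0, key0, h1] with ω e0 ek e1'
    rw [h2] at e1'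
    simp only [Pi.sub_apply, Pi.zero_apply] at *
    rw [e0, ek, e1']
    ring
  -- scaled terms
  set T1 : Ω → ℝ := fun ω => (c1 ω)⁻¹ * W1 ω with hT1_def
  set T2 : Ω → ℝ := fun ω => (c2 ω)⁻¹ * W0 ω with hT2_def
  have hscale_int : ∀ {c : Ω → ℝ} {W : Ω → ℝ}, Measurable[m] c → Measurable W →
      Integrable W μ → (∀ ω, δ ≤ c ω) → Integrable (fun ω => (c ω)⁻¹ * W ω) μ := by
    intro c W hcm hWm hWi hc
    have hcΩ : Measurable c := hcm.mono hm le_rfl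
    refine (hWi.norm.const_mul δ⁻¹).mono'
      ((hcΩ.inv.mul hWm).aestronglyMeasurable)
      (Filter.Eventually.of_forall fun ω => ?_)
    rw [norm_mul]
    have hcpos : (0:ℝ) < c ω := lt_of_lt_of_le hδ0 (hc ω)
    have : ‖(c ω)⁻¹‖ ≤ δ⁻¹ := by
      rw [Real.norm_eq_abs, abs_of_nonneg (inv_nonneg.mpr hcpos.le)]
      exact inv_anti₀ hδ0 (hc ω)
    exact mul_le_mul_of_nonneg_right this (norm_nonneg _) |>.trans_eq rfl
  have hT1i : Integrable T1 μ := hscale_int hc1m hW1m hW1i hc1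
  have hT2i : Integrable T2 μ := hscale_int hc2m hW0m hW0i hc2
  have hT1z : μ[T1|m] =ᵐ[μ] 0 := by
    have h := condExp_mul_of_stronglyMeasurable_left (m := m) (μ := μ)
      (f := fun ω => (c1 ω)⁻¹) (g := W1) (hc1m.inv).stronglyMeasurable hT1i hW1i
    refine h.trans ?_
    filter_upwards [hW1z] with ω hω
    simp only [Pi.mul_apply, Pi.zero_apply] at *
    rw [hω, mul_zero]
  have hT2z : μ[T2|m] =ᵐ[μ] 0 := by
    have h := condExp_mul_of_stronglyMeasurable_left (m := m) (μ := μ)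
      (f := fun ω => (c2 ω)⁻¹) (g := W0) (hc2m.inv).stronglyMeasurable hT2i hW0i
    refine h.trans ?_
    filter_upwards [hW0z] with ω hω
    simp only [Pi.mul_apply, Pi.zero_apply] at *
    rw [hω, mul_zero]
  -- the functional equals T1 - T2 + μ1 - μ0
  have hFeq : (fun ω => A ω * (Y ω - (μ[Y1|m]) ω) / c1 ω
      - (1 - A ω) * (Y ω - (μ[Y0|m]) ω) / c2 ω
      + (μ[Y1|m]) ω - (μ[Y0|m]) ω)
      = fun ω => T1 ω - T2 ω + (μ[Y1|m]) ω - (μ[Y0|m]) ω := by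
    funext ω
    have hY1eq : A ω * (Y ω - (μ[Y1|m]) ω) = W1 ω := by
      rcases hA01 ω with h | h
      · simp [hW1_def, h]
      · rw [hYdef ω, h]; simp [hW1_def, h]
    have hY0eq : (1 - A ω) * (Y ω - (μ[Y0|m]) ω) = W0 ω := by
      rcases hA01 ω with h | h
      · rw [hYdef ω, h]; simp [hW0_def, h]
      · simp [hW0_def, h]
    rw [hY1eq, hY0eq, hT1_def, hT2_def]
    ring
  have hcond : μ[(fun ω => A ω * (Y ω - (μ[Y1|m]) ω) / c1 ω
      - (1 - A ω) * (Y ω - (μ[Y0|m]) ω) / c2 ω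
      + (μ[Y1|m]) ω - (μ[Y0|m]) ω)|m]
      =ᵐ[μ] fun ω => (μ[Y1|m]) ω - (μ[Y0|m]) ω := by
    rw [hFeq]
    have e1 : μ[(fun ω => T1 ω - T2 ω + (μ[Y1|m]) ω - (μ[Y0|m]) ω)|m]
        =ᵐ[μ] μ[(fun ω => T1 ω - T2 ω + (μ[Y1|m]) ω)|m] - μ[μ[Y0|m]|m] :=
      condExp_sub ((hT1i.sub hT2i).add integrable_condExp) integrable_condExp m
    have e2 : μ[(fun ω => T1 ω - T2 ω + (μ[Y1|m]) ω)|m]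
        =ᵐ[μ] μ[(fun ω => T1 ω - T2 ω)|m] + μ[μ[Y1|m]|m] :=
      condExp_add (hT1i.sub hT2i) integrable_condExp m
    have e3 : μ[(fun ω => T1 ω - T2 ω)|m] =ᵐ[μ] μ[T1|m] - μ[T2|m] :=
      condExp_sub hT1i hT2i m
    have e4 : μ[μ[Y1|m]|m] = μ[Y1|m] :=
      condExp_of_stronglyMeasurable hm stronglyMeasurable_condExp integrable_condExp
    have e5 : μ[μ[Y0|m]|m] = μ[Y0|m] :=
      condExp_of_stronglyMeasurable hm stronglyMeasurable_condExp integrable_condExp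
    filter_upwards [e1, e2, e3, hT1z, hT2z] with ω a1 a2 a3 a4 a5
    rw [e4] at a2
    rw [e5] at a1
    simp only [Pi.sub_apply, Pi.add_apply, Pi.zero_apply] at *
    rw [a1, a2, a3, a4, a5]
    ring
  have hsub : μ[(fun ω => Y1 ω - Y0 ω)|m] =ᵐ[μ] fun ω => (μ[Y1|m]) ω - (μ[Y0|m]) ω := by
    have := condExp_sub (μ := μ) (m := m) hY1i hY0i
    filter_upwards [this] with ω h
    exact h
  calc μ[(fun ω => A ω * (Y ω - (μ[Y1|m]) ω) / c1 ω
        - (1 - A ω) * (Y ω - (μ[Y0|m]) ω) / c2 ω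
        + (μ[Y1|m]) ω - (μ[Y0|m]) ω)|mZ]
      =ᵐ[μ] μ[μ[(fun ω => A ω * (Y ω - (μ[Y1|m]) ω) / c1 ω
        - (1 - A ω) * (Y ω - (μ[Y0|m]) ω) / c2 ω
        + (μ[Y1|m]) ω - (μ[Y0|m]) ω)|m]|mZ] := (condExp_condExp_of_le hZ hm).symm
    _ =ᵐ[μ] μ[(fun ω => (μ[Y1|m]) ω - (μ[Y0|m]) ω)|mZ] := condExp_congr_ae hcond
    _ =ᵐ[μ] μ[μ[(fun ω => Y1 ω - Y0 ω)|m]|mZ] := (condExp_congr_ae hsub).symm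
    _ =ᵐ[μ] μ[(fun ω => Y1 ω - Y0 ω)|mZ] := condExp_condExp_of_le hZ hm

/-- Double robustness of the AIPW functional, outcome-regression side: under
unconfoundedness, for ANY measurable `e : S → ℝ` with `δ ≤ e(x) ≤ 1 − δ` for all `x`, and
with the TRUE conditional means `μ1(X) = E[Y1 | σ(X)]`, `μ0(X) = E[Y0 | σ(X)]`,
`E[ A·(Y − μ1(X))/e(X) − (1−A)·(Y − μ0(X))/(1 − e(X)) + μ1(X) − μ0(X) | σ(Z) ]
  = E[Y1 − Y0 | σ(Z)]` a.s. -/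
theorem aipw_double_robustness_or_side
    {Ω : Type*} [MeasurableSpace Ω] [StandardBorelSpace Ω]
    {S : Type*} [MeasurableSpace S]
    (μ : Measure Ω) [IsProbabilityMeasure μ]
    (A : Ω → ℝ) (hAm : Measurable A) (hA01 : ∀ ω, A ω = 0 ∨ A ω = 1)
    (X : Ω → S) (hXm : Measurable X)
    (Y0 Y1 : Ω → ℝ) (hY0m : Measurable Y0) (hY1m : Measurable Y1)
    (hY0i : Integrable Y0 μ) (hY1i : Integrable Y1 μ)
    (Y : Ω → ℝ) (hYdef : ∀ ω, Y ω = A ω * Y1 ω + (1 - A ω) * Y0 ω)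
    (huncf : CondIndepFun (MeasurableSpace.comap X inferInstance) (hXm.comap_le)
      A (fun ω => (Y0 ω, Y1 ω)) μ)
    (δ : ℝ) (hδ0 : 0 < δ) (hδhalf : δ < 1 / 2)
    (e : S → ℝ) (hem : Measurable e) (he : ∀ x, δ ≤ e x ∧ e x ≤ 1 - δ)
    (g : S → ℝ) (hg : Measurable g) :
    μ[fun ω =>
        A ω * (Y ω - (μ[Y1 | MeasurableSpace.comap X inferInstance]) ω) / e (X ω)
        - (1 - A ω) * (Y ω - (μ[Y0 | MeasurableSpace.comap X inferInstance]) ω)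
          / (1 - e (X ω))
        + (μ[Y1 | MeasurableSpace.comap X inferInstance]) ω
        - (μ[Y0 | MeasurableSpace.comap X inferInstance]) ω
      | MeasurableSpace.comap (fun ω => g (X ω)) inferInstance]
      =ᵐ[μ]
    μ[fun ω => Y1 ω - Y0 ω
      | MeasurableSpace.comap (fun ω => g (X ω)) inferInstance] := by
  have hXmX : Measurable[MeasurableSpace.comap X inferInstance] X :=
    measurable_iff_comap_le.mpr le_rfl
  have hZ : MeasurableSpace.comap (fun ω => g (X ω)) inferInstance
      ≤ MeasurableSpace.comap X inferInstance := by
    have h1 : MeasurableSpace.comap (fun ω => g (X ω)) inferInstance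
        = MeasurableSpace.comap X (MeasurableSpace.comap g inferInstance) :=
      (MeasurableSpace.comap_comp (f := g) (g := X)).symm
    rw [h1]
    exact MeasurableSpace.comap_mono hg.comap_le
  exact main_aux μ hXm.comap_le hZ A hAm hA01 Y0 Y1 hY0m hY1m hY0i hY1i Y hYdef huncf
    δ hδ0 (fun ω => e (X ω)) (fun ω => 1 - e (X ω))
    (hem.comp hXmX) (measurable_const.sub (hem.comp hXmX))
    (fun ω => (he (X ω)).1) (fun ω => by have h2 := (he (X ω)).2; show δ ≤ 1 - e (X ω); linarith)
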